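/- Let X be a real random variable with E|X| < ∞. For every ε > 0 and δ > 0 there exists p₀ > 0 (depending only on the distribution of X, ε and δ) with the following property: for every n ≥ 1, every probability space, every family X₁,…,Xₙ of real random variables on it each having the same distribution as X, and every set S ⊆ {1,…,n} × {1,…,n} of pairs with #S ≤ p₀·n² such that Xᵢ and Xⱼ are independent whenever (i,j) ∉ S, the average X̄ = (1/n) Σᵢ Xᵢ satisfies P(|X̄ − E X| ≥ ε) ≤ δ. -/

import Mathlib

open MeasureTheory ProbabilityTheory Set


lemma exists_atom_of_zero_one (μ : Measure ℝ) [IsProbabilityMeasure μ]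
    (h01 : ∀ A : Set ℝ, MeasurableSet A → μ A = 0 ∨ μ A = 1) : ∃ c : ℝ, μ {c} = 1 := by
  -- there is t₀ with μ (Iic t₀) = 1
  have hT : Filter.Tendsto (fun t : ℝ => μ (Iic t)) Filter.atTop (nhds (μ univ)) :=
    tendsto_measure_Iic_atTop μ
  rw [measure_univ] at hT
  have h1 : ∀ᶠ t in Filter.atTop, (1/2 : ENNReal) < μ (Iic t) :=
    hT.eventually (eventually_gt_nhds (by norm_num))
  obtain ⟨t₀, ht₀⟩ := h1.exists
  have ht₀1 : μ (Iic t₀) = 1 := by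
    rcases h01 _ measurableSet_Iic with h | h
    · rw [h] at ht₀; simp at ht₀
    · exact h
  -- there is t₁ with μ (Ici t₁) = 1
  have hB : Filter.Tendsto (fun t : ℝ => μ (Ici t)) Filter.atBot (nhds (μ univ)) :=
    tendsto_measure_Ici_atBot μ
  rw [measure_univ] at hB
  obtain ⟨t₁, ht₁⟩ := (hB.eventually (eventually_gt_nhds (by norm_num : (1/2:ENNReal) < 1))).exists
  have ht₁1 : μ (Ici t₁) = 1 := by
    rcases h01 _ measurableSet_Ici with h | h
    · rw [h] at ht₁; simp at ht₁
    · exact h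
  set s : Set ℝ := {t | μ (Iic t) = 1} with hs
  have hne : s.Nonempty := ⟨t₀, ht₀1⟩
  have hbdd : BddBelow s := by
    refine ⟨t₁ - 1, fun u hu => ?_⟩
    by_contra hlt
    push_neg at hlt
    have hdisj : Disjoint (Iic u) (Ici t₁) := by
      rw [Set.disjoint_left]
      intro x hx hx'
      simp only [mem_Iic] at hx
      simp only [mem_Ici] at hx'
      linarith
    have := measure_union hdisj measurableSet_Ici (μ := μ)
    have hle : μ (Iic u ∪ Ici t₁) ≤ 1 := prob_le_one
    rw [this, hu, ht₁1] at hle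
    norm_num at hle
  set c := sInf s with hc
  have hIic : μ (Iic c) = 1 := by
    rcases h01 _ measurableSet_Iic with h | h
    · exfalso
      have hIoi : μ (Ioi c) = 1 := by
        rw [← compl_Iic, measure_compl measurableSet_Iic (measure_ne_top μ _), h,
          measure_univ, tsub_zero]
      have hsub : Ioi c ⊆ ⋃ n : ℕ, Ici (c + 1/(n+1)) := by
        intro x hx
        obtain ⟨n, hn⟩ := exists_nat_one_div_lt (by simpa using hx : (0:ℝ) < x - c)
        exact Set.mem_iUnion.2 ⟨n, by push_cast; push_cast at hn; simp only [mem_Ici]; linarith⟩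
      have hzero : ∀ n : ℕ, μ (Ici (c + 1/(n+1))) = 0 := by
        intro n
        obtain ⟨t, hts, htlt⟩ := exists_lt_of_csInf_lt hne
          (show sInf s < c + 1/(n+1) by
            have hpos : (0:ℝ) < 1/((n:ℝ)+1) := by positivity
            rw [← hc]; linarith)
        have h2 : Ici (c + 1/(n+1)) ⊆ (Iic t)ᶜ := by
          intro x hx
          simp only [mem_Ici] at hx
          simp only [mem_compl_iff, mem_Iic, not_le]
          linarith
        have h3 : μ ((Iic t)ᶜ) = 0 := by
          rw [measure_compl measurableSet_Iic (measure_ne_top μ _), hts, measure_univ, tsub_self]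
        exact le_antisymm (le_trans (measure_mono h2) h3.le) (zero_le)
      have : μ (Ioi c) ≤ 0 := by
        refine le_trans (measure_mono hsub) ?_
        refine le_trans (measure_iUnion_le _) ?_
        simp only [one_div] at hzero
        simp [hzero]
      rw [hIoi] at this; norm_num at this
    · exact h
  have hIio : μ (Iio c) = 0 := by
    have hsub : Iio c ⊆ ⋃ n : ℕ, Iic (c - 1/(n+1)) := by
      intro x hx
      obtain ⟨n, hn⟩ := exists_nat_one_div_lt (by simpa using hx : (0:ℝ) < c - x)
      exact Set.mem_iUnion.2 ⟨n, by push_cast; push_cast at hn; simp only [mem_Iic]; linarith⟩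
    have hzero : ∀ n : ℕ, μ (Iic (c - 1/(n+1))) = 0 := by
      intro n
      rcases h01 _ measurableSet_Iic with h | h
      · exact h
      · exfalso
        have : c ≤ c - 1/(n+1) := csInf_le hbdd h
        have hpos : (0:ℝ) < 1/(n+1) := by positivity
        linarith
    refine le_antisymm (le_trans (measure_mono hsub) (le_trans (measure_iUnion_le _) ?_))
      (zero_le)
    simp only [one_div] at hzero
    simp [hzero]
  refine ⟨c, le_antisymm prob_le_one ?_⟩
  have : Iic c ⊆ Iio c ∪ {c} := by
    intro x hx
    rcases lt_or_eq_of_le (mem_Iic.1 hx) with h | h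
    · exact Or.inl h
    · exact Or.inr (by simp [h])
  calc (1:ENNReal) = μ (Iic c) := hIic.symm
    _ ≤ μ (Iio c) + μ {c} := le_trans (measure_mono this) (measure_union_le _ _)
    _ = μ {c} := by rw [hIio, zero_add]

lemma abs_integral_le_integral_abs {α : Type*} [MeasurableSpace α] {μ : Measure α}
    {f : α → ℝ} : |∫ a, f a ∂μ| ≤ ∫ a, |f a| ∂μ := by
  simpa using norm_integral_le_integral_norm (μ := μ) f

lemma clamp_continuous (M : ℝ) : Continuous (fun x : ℝ => max (-M) (min x M)) :=
  continuous_const.max (continuous_id.min continuous_const)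

lemma clamp_abs_le (M x : ℝ) (hM : 0 ≤ M) : |max (-M) (min x M)| ≤ M := by
  rw [abs_le]
  constructor
  · exact le_max_left _ _
  · exact max_le (by linarith) (min_le_right _ _)

lemma sub_clamp_abs_le (M x : ℝ) (hM : 0 ≤ M) : |x - max (-M) (min x M)| ≤ |x| := by
  rcases le_total x (-M) with h | h
  · rw [min_eq_left (by linarith), max_eq_left h, abs_of_nonpos (by linarith),
      abs_of_nonpos (by linarith)]
    linarith
  · rcases le_total x M with h2 | h2
    · rw [min_eq_left h2, max_eq_right h]
      simp [hM]
    · rw [min_eq_right h2, max_eq_right (by linarith : -M ≤ M), abs_of_nonneg (by linarith),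
        abs_of_nonneg (by linarith)]
      linarith

lemma clamp_eq (M x : ℝ) (h : |x| ≤ M) : max (-M) (min x M) = x := by
  rw [abs_le] at h
  rw [min_eq_left h.2, max_eq_right h.1]

lemma integrable_of_abs_le {Ω : Type*} [MeasurableSpace Ω] {P : Measure Ω}
    [IsProbabilityMeasure P] {f : Ω → ℝ} (hf : Measurable f) {C : ℝ}
    (h : ∀ ω, |f ω| ≤ C) : Integrable f P :=
  (integrable_const C).mono' hf.aestronglyMeasurable (ae_of_all _ (by simpa using h))

lemma integral_comp_eq {Ω₀ Ω : Type*} [MeasurableSpace Ω₀] [MeasurableSpace Ω]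
    (P₀ : Measure Ω₀) (P : Measure Ω) (X : Ω₀ → ℝ) (Y : Ω → ℝ)
    (hX : Measurable X) (hY : Measurable Y) (hmap : P.map Y = P₀.map X)
    (g : ℝ → ℝ) (hg : Continuous g) : ∫ ω, g (Y ω) ∂P = ∫ x, g (X x) ∂P₀ := by
  rw [← integral_map hY.aemeasurable hg.aestronglyMeasurable, hmap,
    integral_map hX.aemeasurable hg.aestronglyMeasurable]

lemma tendsto_trunc {Ω₀ : Type*} [MeasurableSpace Ω₀] (P₀ : Measure Ω₀)
    [IsProbabilityMeasure P₀] (X : Ω₀ → ℝ) (hXm : Measurable X) (hXint : Integrable X P₀) :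
    Filter.Tendsto (fun m : ℕ => ∫ ω, |X ω - max (-(m:ℝ)) (min (X ω) m)| ∂P₀)
      Filter.atTop (nhds 0) := by
  have h := tendsto_integral_of_dominated_convergence (μ := P₀)
    (F := fun (m : ℕ) ω => |X ω - max (-(m:ℝ)) (min (X ω) m)|)
    (f := fun _ => (0:ℝ)) (bound := fun ω => |X ω|)
    (fun m => (((continuous_abs.comp (continuous_id.sub (clamp_continuous m))).measurable).comp
      hXm).aestronglyMeasurable)
    hXint.abs
    (fun m => ae_of_all _ (fun ω => by
      simpa using sub_clamp_abs_le (m:ℝ) (X ω) (by positivity)))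
    (ae_of_all _ (fun ω => by
      have : ∀ᶠ m : ℕ in Filter.atTop, |X ω - max (-(m:ℝ)) (min (X ω) m)| = 0 := by
        filter_upwards [Filter.eventually_ge_atTop ⌈|X ω|⌉₊] with m hm
        rw [clamp_eq _ _ (le_trans (Nat.le_ceil _) (by exact_mod_cast hm)), sub_self, abs_zero]
      exact Filter.Tendsto.congr' (this.mono fun m hm => hm.symm) tendsto_const_nhds))
  simpa using h


set_option maxHeartbeats 1000000 in
theorem wlln_mostly_independent
    {Ω₀ : Type*} [MeasurableSpace Ω₀] (P₀ : Measure Ω₀) [IsProbabilityMeasure P₀]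
    (X : Ω₀ → ℝ) (hXm : Measurable X) (hXint : Integrable X P₀)
    (ε δ : ℝ) (hε : 0 < ε) (hδ : 0 < δ) :
    ∃ p₀ : ℝ, 0 < p₀ ∧
      ∀ (n : ℕ), 1 ≤ n →
      ∀ (Ω : Type*) (_ : MeasurableSpace Ω) (P : Measure Ω), IsProbabilityMeasure P →
      ∀ (Y : Fin n → Ω → ℝ), (∀ i, Measurable (Y i)) →
      (∀ i, P.map (Y i) = P₀.map X) →
      ∀ S : Finset (Fin n × Fin n), (S.card : ℝ) ≤ p₀ * (n : ℝ) ^ 2 →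
      (∀ i j, (i, j) ∉ S → IndepFun (Y i) (Y j) P) →
      (P {ω | ε ≤ |(n : ℝ)⁻¹ * (∑ i, Y i ω) - ∫ x, X x ∂P₀|}).toReal ≤ δ := by
  -- Choose the truncation level M
  obtain ⟨m, hmη', hm1⟩ : ∃ m : ℕ,
      (∫ ω, |X ω - max (-(m:ℝ)) (min (X ω) m)| ∂P₀) < min (ε/4) (ε*δ/16) ∧ 1 ≤ m := by
    have h := tendsto_trunc P₀ X hXm hXint
    have hpos : (0:ℝ) < min (ε/4) (ε*δ/16) := by positivity
    exact ((h.eventually_lt_const hpos).and (Filter.eventually_ge_atTop 1)).exists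
  set M : ℝ := (m:ℝ) with hMdef
  have hM1 : (1:ℝ) ≤ M := by rw [hMdef]; exact_mod_cast hm1
  have hM0 : (0:ℝ) ≤ M := by linarith
  set φ : ℝ → ℝ := fun x => max (-M) (min x M) with hφdef
  have hφc : Continuous φ := clamp_continuous M
  set η : ℝ := ∫ ω, |X ω - φ (X ω)| ∂P₀ with hηdef
  have hη1 : η ≤ ε/4 := le_trans hmη'.le (min_le_left _ _)
  have hη2 : η ≤ ε*δ/16 := le_trans hmη'.le (min_le_right _ _)
  refine ⟨δ * ε^2 / (128 * M^2), by positivity, ?_⟩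
  intro n hn Ω mΩ P hP Y hYm hmap S hScard hSind
  have hn0 : (0:ℝ) < (n:ℝ) := by exact_mod_cast hn
  set μX : ℝ := ∫ x, X x ∂P₀ with hμXdef
  by_cases hdiag : ∀ i : Fin n, (i, i) ∈ S
  · -- main (non-degenerate) case
    set μφ : ℝ := ∫ x, φ (X x) ∂P₀ with hμφdef
    set Z : Fin n → Ω → ℝ := fun i ω => φ (Y i ω) - μφ with hZdef
    set W : Fin n → Ω → ℝ := fun i ω => Y i ω - φ (Y i ω) with hWdef
    have hφYm : ∀ i, Measurable (fun ω => φ (Y i ω)) := fun i => hφc.measurable.comp (hYm i)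
    have hφXint : Integrable (fun x => φ (X x)) P₀ :=
      integrable_of_abs_le (hφc.measurable.comp hXm) (fun x => clamp_abs_le M (X x) hM0)
    have hμφb : |μφ| ≤ M := by
      calc |μφ| ≤ ∫ x, |φ (X x)| ∂P₀ := _root_.abs_integral_le_integral_abs
        _ ≤ ∫ _x, M ∂P₀ := integral_mono hφXint.abs (integrable_const M)
            (fun x => clamp_abs_le M (X x) hM0)
        _ = M := by simp
    have hZb : ∀ i ω, |Z i ω| ≤ 2*M := by
      intro i ω
      calc |Z i ω| ≤ |φ (Y i ω)| + |μφ| := abs_sub _ _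
        _ ≤ M + M := add_le_add (clamp_abs_le M _ hM0) hμφb
        _ = 2*M := by ring
    have hZm : ∀ i, Measurable (Z i) :=
      fun i => (hφYm i).sub measurable_const
    have hZint : ∀ i, Integrable (Z i) P := fun i => integrable_of_abs_le (hZm i) (hZb i)
    have hEZ : ∀ i, ∫ ω, Z i ω ∂P = 0 := by
      intro i
      have h1 : ∫ ω, φ (Y i ω) ∂P = μφ :=
        integral_comp_eq P₀ P X (Y i) hXm (hYm i) (hmap i) φ hφc
      rw [hZdef]
      rw [integral_sub (integrable_of_abs_le (hφYm i)
        (fun ω => clamp_abs_le M _ hM0)) (integrable_const μφ), h1, integral_const]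
      simp
    have hprodint : ∀ i j : Fin n, Integrable (fun ω => Z i ω * Z j ω) P := by
      intro i j
      refine integrable_of_abs_le ((hZm i).mul (hZm j)) (C := (2*M)*(2*M)) (fun ω => ?_)
      rw [abs_mul]
      exact mul_le_mul (hZb i ω) (hZb j ω) (abs_nonneg _) (by linarith)
    -- second moment bound
    have hkey : ∫ ω, (∑ i, Z i ω)^2 ∂P ≤ (S.card : ℝ) * (4 * M^2) := by
      have hexp : ∀ ω, (∑ i, Z i ω)^2 = ∑ p : Fin n × Fin n, Z p.1 ω * Z p.2 ω := by
        intro ω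
        rw [sq, Finset.sum_mul_sum, ← Finset.sum_product', Finset.univ_product_univ]
      have hint : ∫ ω, (∑ i, Z i ω)^2 ∂P = ∑ p : Fin n × Fin n, ∫ ω, Z p.1 ω * Z p.2 ω ∂P := by
        rw [integral_congr_ae (ae_of_all _ hexp)]
        exact integral_finset_sum _ (fun p _ => hprodint p.1 p.2)
      have hzero : ∀ p ∈ (Finset.univ : Finset (Fin n × Fin n)) \ S,
          ∫ ω, Z p.1 ω * Z p.2 ω ∂P = 0 := by
        intro p hp
        have hps : p ∉ S := (Finset.mem_sdiff.1 hp).2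
        have hind : IndepFun (Y p.1) (Y p.2) P := hSind p.1 p.2 (by simpa using hps)
        have hindZ : IndepFun (Z p.1) (Z p.2) P :=
          hind.comp (φ := fun x => φ x - μφ) (ψ := fun x => φ x - μφ)
            (hφc.measurable.sub measurable_const) (hφc.measurable.sub measurable_const)
        have := hindZ.integral_mul_eq_mul_integral (hZm p.1).aestronglyMeasurable (hZm p.2).aestronglyMeasurable
        calc ∫ ω, Z p.1 ω * Z p.2 ω ∂P = ∫ ω, (Z p.1 * Z p.2) ω ∂P := rfl
          _ = (∫ ω, Z p.1 ω ∂P) * ∫ ω, Z p.2 ω ∂P := this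
          _ = 0 := by rw [hEZ p.1, hEZ p.2, mul_zero]
      have hsplit : ∑ p : Fin n × Fin n, ∫ ω, Z p.1 ω * Z p.2 ω ∂P
          = ∑ p ∈ S, ∫ ω, Z p.1 ω * Z p.2 ω ∂P := by
        rw [← Finset.sum_sdiff (Finset.subset_univ S), Finset.sum_eq_zero hzero, zero_add]
      have hterm : ∀ p ∈ S, ∫ ω, Z p.1 ω * Z p.2 ω ∂P ≤ 4 * M^2 := by
        intro p _
        calc ∫ ω, Z p.1 ω * Z p.2 ω ∂P ≤ |∫ ω, Z p.1 ω * Z p.2 ω ∂P| := le_abs_self _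
          _ ≤ ∫ ω, |Z p.1 ω * Z p.2 ω| ∂P := _root_.abs_integral_le_integral_abs
          _ ≤ ∫ _ω, (2*M)*(2*M) ∂P := integral_mono (hprodint p.1 p.2).abs
              (integrable_const _) (fun ω => by
                rw [abs_mul]
                exact mul_le_mul (hZb p.1 ω) (hZb p.2 ω) (abs_nonneg _) (by linarith))
          _ = 4 * M^2 := by simp; ring
      calc ∫ ω, (∑ i, Z i ω)^2 ∂P = ∑ p ∈ S, ∫ ω, Z p.1 ω * Z p.2 ω ∂P := by
            rw [hint, hsplit]
        _ ≤ ∑ _p ∈ S, 4 * M^2 := Finset.sum_le_sum hterm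
        _ = (S.card : ℝ) * (4 * M^2) := by rw [Finset.sum_const, nsmul_eq_mul]
    -- Chebyshev for the truncated part
    set A1 : Set Ω := {ω | ε/2 ≤ |(n:ℝ)⁻¹ * ∑ i, Z i ω|} with hA1def
    have hA1 : (P A1).toReal ≤ δ/8 := by
      set g : Ω → ℝ := fun ω => ((n:ℝ)⁻¹ * ∑ i, Z i ω)^2 with hgdef
      have hgm : Measurable g := ((Finset.univ.measurable_sum (fun i _ => hZm i)).const_mul
        _).pow_const 2
      have hsb : ∀ ω, |(n:ℝ)⁻¹ * ∑ i, Z i ω| ≤ 2*M := by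
        intro ω
        rw [abs_mul, abs_inv, Nat.abs_cast]
        calc (n:ℝ)⁻¹ * |∑ i, Z i ω| ≤ (n:ℝ)⁻¹ * ((n:ℝ) * (2*M)) := by
              refine mul_le_mul_of_nonneg_left ?_ (by positivity)
              calc |∑ i, Z i ω| ≤ ∑ i, |Z i ω| := Finset.abs_sum_le_sum_abs _ _
                _ ≤ ∑ _i : Fin n, 2*M := Finset.sum_le_sum (fun i _ => hZb i ω)
                _ = (n:ℝ) * (2*M) := by rw [Finset.sum_const]; simp
          _ = 2*M := by field_simp
      have hgint : Integrable g P := by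
        refine integrable_of_abs_le hgm (C := (2*M)^2) (fun ω => ?_)
        show |((n:ℝ)⁻¹ * ∑ i, Z i ω)^2| ≤ (2*M)^2
        rw [abs_of_nonneg (sq_nonneg _)]
        nlinarith [hsb ω, sq_abs ((n:ℝ)⁻¹ * ∑ i, Z i ω), abs_nonneg ((n:ℝ)⁻¹ * ∑ i, Z i ω)]
      have hmarkov := mul_meas_ge_le_integral_of_nonneg
        (ae_of_all P (fun ω => sq_nonneg ((n:ℝ)⁻¹ * ∑ i, Z i ω))) hgint ((ε/2)^2)
      have hset : A1 = {ω | (ε/2)^2 ≤ g ω} := by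
        ext ω
        simp only [hA1def, hgdef, Set.mem_setOf_eq]
        constructor
        · intro h
          calc (ε/2)^2 ≤ |(n:ℝ)⁻¹ * ∑ i, Z i ω|^2 := pow_le_pow_left₀ (by positivity) h 2
            _ = ((n:ℝ)⁻¹ * ∑ i, Z i ω)^2 := sq_abs _
        · intro h
          nlinarith [abs_nonneg ((n:ℝ)⁻¹ * ∑ i, Z i ω), sq_abs ((n:ℝ)⁻¹ * ∑ i, Z i ω), hε]
      have hgval : ∫ ω, g ω ∂P ≤ 4 * (δ * ε^2 / (128 * M^2)) * M^2 := by
        have : ∫ ω, g ω ∂P = ((n:ℝ)⁻¹)^2 * ∫ ω, (∑ i, Z i ω)^2 ∂P := by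
          simp_rw [hgdef, mul_pow]
          exact integral_const_mul _ _
        rw [this]
        calc ((n:ℝ)⁻¹)^2 * ∫ ω, (∑ i, Z i ω)^2 ∂P
            ≤ ((n:ℝ)⁻¹)^2 * ((δ * ε^2 / (128 * M^2)) * (n:ℝ)^2 * (4 * M^2)) := by
              refine mul_le_mul_of_nonneg_left ?_ (by positivity)
              refine le_trans hkey ?_
              refine mul_le_mul_of_nonneg_right hScard (by positivity)
          _ = 4 * (δ * ε^2 / (128 * M^2)) * M^2 := by field_simp
      rw [hset]
      have hε2 : (0:ℝ) < (ε/2)^2 := by positivity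
      rw [← le_div_iff₀' hε2] at hmarkov
      refine le_trans hmarkov ?_
      rw [div_le_iff₀ hε2]
      refine le_trans hgval (le_of_eq ?_)
      have hM2 : (0:ℝ) < M^2 := by positivity
      field_simp
      ring
    -- Markov for the tail part
    set A2 : Set Ω := {ω | ε/4 ≤ |(n:ℝ)⁻¹ * ∑ i, W i ω|} with hA2def
    have hYint : ∀ i, Integrable (Y i) P := by
      intro i
      have h1 : Integrable id (P.map (Y i)) := by
        rw [hmap i]
        exact (integrable_map_measure aestronglyMeasurable_id hXm.aemeasurable).2 hXint
      exact (integrable_map_measure aestronglyMeasurable_id (hYm i).aemeasurable).1 h1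
    have hφYint : ∀ i, Integrable (fun ω => φ (Y i ω)) P :=
      fun i => integrable_of_abs_le (hφYm i) (fun ω => clamp_abs_le M _ hM0)
    have hWint : ∀ i, Integrable (W i) P := fun i => (hYint i).sub (hφYint i)
    have hWabs : ∀ i, ∫ ω, |W i ω| ∂P = η := by
      intro i
      have := integral_comp_eq P₀ P X (Y i) hXm (hYm i) (hmap i)
        (fun y => |y - φ y|) (continuous_abs.comp (continuous_id.sub hφc))
      simp only [hWdef]
      rw [hηdef]
      exact this
    have hA2 : (P A2).toReal ≤ δ/4 := by
      set f2 : Ω → ℝ := fun ω => |(n:ℝ)⁻¹ * ∑ i, W i ω| with hf2def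
      have hsumint : Integrable (fun ω => ∑ i, W i ω) P :=
        integrable_finset_sum _ (fun i _ => hWint i)
      have hf2int : Integrable f2 P := (hsumint.const_mul _).abs
      have hf2val : ∫ ω, f2 ω ∂P ≤ η := by
        have hptw : ∀ ω, f2 ω ≤ (n:ℝ)⁻¹ * ∑ i, |W i ω| := by
          intro ω
          simp only [hf2def]
          rw [abs_mul, abs_inv, Nat.abs_cast]
          exact mul_le_mul_of_nonneg_left (Finset.abs_sum_le_sum_abs _ _) (by positivity)
        have hrhsint : Integrable (fun ω => (n:ℝ)⁻¹ * ∑ i, |W i ω|) P :=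
          (integrable_finset_sum _ (fun i _ => (hWint i).abs)).const_mul _
        calc ∫ ω, f2 ω ∂P ≤ ∫ ω, (n:ℝ)⁻¹ * ∑ i, |W i ω| ∂P :=
              integral_mono hf2int hrhsint hptw
          _ = (n:ℝ)⁻¹ * ∑ i, ∫ ω, |W i ω| ∂P := by
              rw [integral_const_mul, integral_finset_sum _ (fun i _ => (hWint i).abs)]
          _ = (n:ℝ)⁻¹ * ((n:ℝ) * η) := by
              rw [Finset.sum_congr rfl (fun i _ => hWabs i), Finset.sum_const]
              simp
          _ = η := by field_simp
      have hmarkov := mul_meas_ge_le_integral_of_nonneg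
        (ae_of_all P (fun ω => abs_nonneg ((n:ℝ)⁻¹ * ∑ i, W i ω))) hf2int (ε/4)
      have hε4 : (0:ℝ) < ε/4 := by positivity
      rw [← le_div_iff₀' hε4] at hmarkov
      refine le_trans hmarkov ?_
      rw [div_le_iff₀ hε4]
      calc ∫ ω, f2 ω ∂P ≤ η := hf2val
        _ ≤ ε*δ/16 := hη2
        _ = δ/4 * (ε/4) := by ring
    -- event inclusion
    have hincl : {ω | ε ≤ |(n:ℝ)⁻¹ * (∑ i, Y i ω) - μX|} ⊆ A1 ∪ A2 := by
      intro ω hω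
      simp only [Set.mem_setOf_eq] at hω
      by_contra hnot
      simp only [Set.mem_union, hA1def, hA2def, Set.mem_setOf_eq, not_or, not_le] at hnot
      obtain ⟨h1, h2⟩ := hnot
      have hT3 : |μφ - μX| ≤ ε/4 := by
        have heq : μφ - μX = ∫ x, (φ (X x) - X x) ∂P₀ := by
          rw [integral_sub hφXint hXint]
        have : |μφ - μX| ≤ η := by
          rw [heq]
          calc |∫ x, (φ (X x) - X x) ∂P₀| ≤ ∫ x, |φ (X x) - X x| ∂P₀ :=
                _root_.abs_integral_le_integral_abs
            _ = η := by rw [hηdef]; congr 1; funext x; rw [abs_sub_comm]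
        linarith
      have hid : (n:ℝ)⁻¹ * (∑ i, Y i ω) - μX
          = ((n:ℝ)⁻¹ * ∑ i, Z i ω) + ((n:ℝ)⁻¹ * ∑ i, W i ω) + (μφ - μX) := by
        have hsum : ∑ i, Z i ω + ∑ i, W i ω = ∑ i, Y i ω - (n:ℝ) * μφ := by
          rw [← Finset.sum_add_distrib]
          have : ∀ i : Fin n, Z i ω + W i ω = Y i ω - μφ := by
            intro i; simp only [hZdef, hWdef]; ring
          rw [Finset.sum_congr rfl (fun i _ => this i), Finset.sum_sub_distrib,
            Finset.sum_const]
          simp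
        have hninv : (n:ℝ)⁻¹ * (n:ℝ) = 1 := inv_mul_cancel₀ (ne_of_gt hn0)
        have := congrArg (fun t => (n:ℝ)⁻¹ * t) hsum
        simp only [mul_add, mul_sub] at this
        rw [← mul_assoc, hninv, one_mul] at this
        linarith
      rw [hid] at hω
      have := abs_add_three ((n:ℝ)⁻¹ * ∑ i, Z i ω) ((n:ℝ)⁻¹ * ∑ i, W i ω) (μφ - μX)
      linarith
    -- combine
    calc (P {ω | ε ≤ |(n:ℝ)⁻¹ * (∑ i, Y i ω) - μX|}).toReal
        ≤ (P (A1 ∪ A2)).toReal := by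
          refine ENNReal.toReal_mono (measure_ne_top _ _) (measure_mono hincl)
      _ ≤ (P A1 + P A2).toReal := ENNReal.toReal_mono
          (ENNReal.add_ne_top.2 ⟨measure_ne_top _ _, measure_ne_top _ _⟩)
          (measure_union_le _ _)
      _ = (P A1).toReal + (P A2).toReal := ENNReal.toReal_add
          (measure_ne_top _ _) (measure_ne_top _ _)
      _ ≤ δ/8 + δ/4 := add_le_add hA1 hA2
      _ ≤ δ := by linarith
  · -- degenerate case: some Y i is independent of itself
    push_neg at hdiag
    obtain ⟨i₀, hi₀⟩ := hdiag
    have hself : IndepFun (Y i₀) (Y i₀) P := hSind i₀ i₀ hi₀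
    haveI : IsProbabilityMeasure (P₀.map X) := Measure.isProbabilityMeasure_map hXm.aemeasurable
    have h01 : ∀ A : Set ℝ, MeasurableSet A → (P₀.map X) A = 0 ∨ (P₀.map X) A = 1 := by
      intro A hA
      have hval : (P₀.map X) A = P (Y i₀ ⁻¹' A) := by
        rw [← hmap i₀, Measure.map_apply (hYm i₀) hA]
      have hsq := hself.measure_inter_preimage_eq_mul A A hA hA
      rw [Set.inter_self] at hsq
      rcases eq_or_ne (P (Y i₀ ⁻¹' A)) 0 with ha0 | ha0
      · left; rw [hval, ha0]
      · right
        rw [hval]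
        exact ((ENNReal.mul_right_inj ha0 (measure_ne_top _ _)).1
          (by rw [mul_one]; exact hsq)).symm
    obtain ⟨c, hc⟩ := exists_atom_of_zero_one (P₀.map X) h01
    have hXc : X =ᵐ[P₀] fun _ => c := by
      have h1 : P₀ (X ⁻¹' {c}) = 1 := by
        rw [← Measure.map_apply hXm (measurableSet_singleton c)]; exact hc
      rw [Filter.EventuallyEq, ae_iff]
      have : {x | ¬ X x = c} = (X ⁻¹' {c})ᶜ := by ext x; simp
      rw [this, measure_compl (hXm (measurableSet_singleton c)) (measure_ne_top _ _),
        measure_univ, h1, tsub_self]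
    have hμXc : μX = c := by
      rw [hμXdef, integral_congr_ae hXc, integral_const]
      simp
    have hYc : ∀ j, Y j =ᵐ[P] fun _ => c := by
      intro j
      have h1 : P (Y j ⁻¹' {c}) = 1 := by
        rw [← Measure.map_apply (hYm j) (measurableSet_singleton c), hmap j]; exact hc
      rw [Filter.EventuallyEq, ae_iff]
      have : {ω | ¬ Y j ω = c} = (Y j ⁻¹' {c})ᶜ := by ext ω; simp
      rw [this, measure_compl ((hYm j) (measurableSet_singleton c)) (measure_ne_top _ _),
        measure_univ, h1, tsub_self]
    have hall : ∀ᵐ ω ∂P, ∀ j, Y j ω = c := (ae_all_iff).2 hYc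
    have hnull : P {ω | ε ≤ |(n:ℝ)⁻¹ * (∑ i, Y i ω) - μX|} = 0 := by
      refine measure_mono_null (fun ω hω => ?_) (ae_iff.1 hall)
      simp only [Set.mem_setOf_eq] at hω ⊢
      intro hconst
      have hsum : ∑ i, Y i ω = (n:ℝ) * c := by
        rw [Finset.sum_congr rfl (fun j _ => hconst j), Finset.sum_const]
        simp
      rw [hsum, ← mul_assoc, inv_mul_cancel₀ (ne_of_gt hn0), one_mul, hμXc, sub_self,
        abs_zero] at hω
      linarith
    rw [hnull]
    simpa using hδ.le
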